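/- Let G be a locally compact group with left Haar measure, E a Banach space, μ: G → L(E) a norm-continuous anti-representation, π(t) = μ(t)* the induced representation on E*, Φ(f) = ∫ f(t)μ(t)dt the integrated anti-representation of C_c(G), and Φ̌(f) = Φ(f)*. If c: G → E* is a weak*-continuous map satisfying the cocycle identity c(st) = π(s)(c(t)) + c(s), then the map I(c): C_c(G) → E* defined by I(c)(f)(x) = ∫_G f(t) c(t)(x) dt is locally bounded (L¹-bounded on functions supported in each fixed compact set) and satisfies I(c)(f*g) = Φ̌(f) I(c)(g) + ε_G(g) I(c)(f) for all f, g ∈ C_c(G), where ε_G(g) = ∫_G g(t) dt. -/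

import Mathlib

open Filter Topology MeasureTheory Pointwise

/-- For a norm-continuous anti-representation `μ` of `G` on `E` with dual
representation `π(t) = μ(t)*`, and a weak*-continuous 1-cocycle `c : G → E*`, the map
`I(c)(f)(x) = ∫ f(t) c(t)(x) dt` on `C_c(G)` is locally bounded and satisfies
`I(c)(f*g) = Φ̌(f) I(c)(g) + ε_G(g) I(c)(f)`. -/
theorem stmt7 {G E : Type*} [Group G] [TopologicalSpace G] [IsTopologicalGroup G]
    [LocallyCompactSpace G] [MeasurableSpace G] [BorelSpace G]
    (ν : Measure G) [ν.IsHaarMeasure]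
    [NormedAddCommGroup E] [NormedSpace ℂ E] [CompleteSpace E]
    (μ : G → E →L[ℂ] E) (hμanti : ∀ s t : G, μ (s * t) = (μ t).comp (μ s)) (hμ1 : μ 1 = 1)
    (hμcont : ∀ x : E, Continuous fun t => μ t x)
    (c : G → E →L[ℂ] ℂ) (hcw : ∀ x : E, Continuous fun t => c t x)
    (hcoc : ∀ s t : G, c (s * t) = (c t).comp (μ s) + c s) :
    (∀ K : Set G, IsCompact K → ∃ C : ℝ, ∀ f : G → ℂ, Continuous f → tsupport f ⊆ K →
      ∀ x : E, ‖∫ t, f t * c t x ∂ν‖ ≤ C * (∫ t, ‖f t‖ ∂ν) * ‖x‖) ∧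
    (∀ f g : G → ℂ, Continuous f → HasCompactSupport f →
      Continuous g → HasCompactSupport g → ∀ x : E,
      (∫ t, (∫ s, f s * g (s⁻¹ * t) ∂ν) * c t x ∂ν) =
        (∫ t, g t * c t (∫ s, f s • μ s x ∂ν) ∂ν)
          + (∫ t, g t ∂ν) * (∫ t, f t * c t x ∂ν)) := by
  constructor
  · -- Local boundedness, via Banach-Steinhaus (uniform boundedness on compacts)
    intro K hK
    have h : ∀ x : E, ∃ C : ℝ, ∀ t : K, ‖c (t : G) x‖ ≤ C := by
      intro x
      obtain ⟨C, hC⟩ := hK.exists_bound_of_continuousOn (hcw x).continuousOn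
      exact ⟨C, fun t => hC t t.2⟩
    obtain ⟨C₀, hC₀⟩ := banach_steinhaus h
    set C : ℝ := max C₀ 0 with hCdef
    have hC0 : 0 ≤ C := le_max_right _ _
    have hC : ∀ t ∈ K, ‖c t‖ ≤ C := fun t ht => (hC₀ ⟨t, ht⟩).trans (le_max_left _ _)
    refine ⟨C, fun f hf hfs x => ?_⟩
    have hfc : HasCompactSupport f :=
      hK.of_isClosed_subset (isClosed_tsupport f) hfs
    have h1 : Integrable (fun t => f t * c t x) ν :=
      (hf.mul (hcw x)).integrable_of_hasCompactSupport hfc.mul_right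
    have h2 : Integrable (fun t => ‖f t‖ * (C * ‖x‖)) ν :=
      (hf.norm.mul continuous_const).integrable_of_hasCompactSupport hfc.norm.mul_right
    calc ‖∫ t, f t * c t x ∂ν‖ ≤ ∫ t, ‖f t * c t x‖ ∂ν := norm_integral_le_integral_norm _
      _ ≤ ∫ t, ‖f t‖ * (C * ‖x‖) ∂ν := by
          refine integral_mono h1.norm h2 fun t => ?_
          simp only [norm_mul]
          by_cases ht : t ∈ K
          · exact mul_le_mul_of_nonneg_left (((c t).le_opNorm x).trans
              (mul_le_mul_of_nonneg_right (hC t ht) (norm_nonneg x))) (norm_nonneg _)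
          · have hft : f t = 0 := image_eq_zero_of_notMem_tsupport (fun h => ht (hfs h))
            simp [hft]
      _ = C * (∫ t, ‖f t‖ ∂ν) * ‖x‖ := by rw [integral_mul_const]; ring
  · -- The cocycle identity for the integrated cocycle
    intro f g hf hfc hg hgc x
    have hμx : Continuous fun s => μ s x := hμcont x
    have hint_fmu : Integrable (fun s => f s • μ s x) ν :=
      (hf.smul hμx).integrable_of_hasCompactSupport hfc.smul_right
    set I : E := ∫ s, f s • μ s x ∂ν with hIdef
    have hint_fcx : Integrable (fun s => f s * c s x) ν :=
      (hf.mul (hcw x)).integrable_of_hasCompactSupport hfc.mul_right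
    set J : ℂ := ∫ s, f s * c s x ∂ν with hJdef
    -- the two double-integrands
    set F : G → G → ℂ := fun s t => f s * g (s⁻¹ * t) * c t x with hFdef
    set H : G → G → ℂ := fun s u => f s * g u * c (s * u) x with hHdef
    -- continuity and compact support of F
    have hFcont : Continuous (Function.uncurry F) := by
      exact ((hf.comp continuous_fst).mul
        (hg.comp ((continuous_fst.inv).mul continuous_snd))).mul
        ((hcw x).comp continuous_snd)
    have hFsupp : HasCompactSupport (Function.uncurry F) := by
      have hsub : Function.support (Function.uncurry F)
          ⊆ tsupport f ×ˢ (tsupport f * tsupport g) := by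
        rintro ⟨s, t⟩ hst
        simp only [Function.uncurry, Function.mem_support, hFdef] at hst
        have hfs : f s ≠ 0 := fun h => hst (by simp [h])
        have hgs : g (s⁻¹ * t) ≠ 0 := fun h => hst (by simp [h])
        refine ⟨subset_tsupport f hfs, ?_⟩
        have ht : t ∈ tsupport f * tsupport g := by
          simpa [mul_inv_cancel_left] using
            Set.mul_mem_mul (subset_tsupport f hfs) (subset_tsupport g hgs)
        exact ht
      have hM : IsCompact (closure (tsupport f ×ˢ (tsupport f * tsupport g))) :=
        (hfc.prod (hfc.mul hgc)).closure
      exact hM.of_isClosed_subset (isClosed_tsupport _) (closure_mono hsub)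
    -- continuity and compact support of H
    have hHcont : Continuous (Function.uncurry H) := by
      exact ((hf.comp continuous_fst).mul (hg.comp continuous_snd)).mul
        ((hcw x).comp continuous_mul)
    have hHsupp : HasCompactSupport (Function.uncurry H) := by
      have hsub : Function.support (Function.uncurry H) ⊆ tsupport f ×ˢ tsupport g := by
        rintro ⟨s, u⟩ hsu
        simp only [Function.uncurry, Function.mem_support, hHdef] at hsu
        have hfs : f s ≠ 0 := fun h => hsu (by simp [h])
        have hgs : g u ≠ 0 := fun h => hsu (by simp [h])
        exact ⟨subset_tsupport f hfs, subset_tsupport g hgs⟩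
      have hM : IsCompact (closure (tsupport f ×ˢ tsupport g)) := (hfc.prod hgc).closure
      exact hM.of_isClosed_subset (isClosed_tsupport _) (closure_mono hsub)
    -- step C : left invariance
    have stepC : ∀ s : G, (∫ t, F s t ∂ν) = ∫ u, H s u ∂ν := by
      intro s
      rw [← MeasureTheory.integral_mul_left_eq_self (fun t => F s t) s]
      simp only [hFdef, hHdef, inv_mul_cancel_left]
    -- step D : cocycle identity pointwise and linearity
    have stepD : ∀ u : G, (∫ s, H s u ∂ν) = g u * c u I + g u * J := by
      intro u
      have e1 : ∀ s, H s u = g u * (c u) (f s • μ s x) + g u * (f s * c s x) := by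
        intro s
        have h2 : c (s * u) x = c u (μ s x) + c s x := by
          rw [hcoc s u]; rfl
        simp only [hHdef, h2, ContinuousLinearMap.map_smul, smul_eq_mul]
        ring
      have hi1 : Integrable (fun s => g u * (c u) (f s • μ s x)) ν :=
        ((c u).integrable_comp hint_fmu).const_mul (g u)
      have hi2 : Integrable (fun s => g u * (f s * c s x)) ν :=
        hint_fcx.const_mul (g u)
      simp_rw [e1]
      rw [integral_add hi1 hi2, integral_const_mul, integral_const_mul,
        ContinuousLinearMap.integral_comp_comm (c u) hint_fmu]
    -- step E : final split
    have hiE1 : Integrable (fun u => g u * c u I) ν :=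
      (hg.mul (hcw I)).integrable_of_hasCompactSupport hgc.mul_right
    have hiE2 : Integrable (fun u => g u * J) ν :=
      (hg.mul continuous_const).integrable_of_hasCompactSupport hgc.mul_right
    calc (∫ t, (∫ s, f s * g (s⁻¹ * t) ∂ν) * c t x ∂ν)
        = ∫ t, (∫ s, F s t ∂ν) ∂ν := by
          simp_rw [hFdef, integral_mul_const]
      _ = ∫ s, (∫ t, F s t ∂ν) ∂ν :=
          (integral_integral_swap_of_hasCompactSupport hFcont hFsupp).symm
      _ = ∫ s, (∫ u, H s u ∂ν) ∂ν := by simp_rw [stepC]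
      _ = ∫ u, (∫ s, H s u ∂ν) ∂ν :=
          integral_integral_swap_of_hasCompactSupport hHcont hHsupp
      _ = ∫ u, (g u * c u I + g u * J) ∂ν := by simp_rw [stepD]
      _ = (∫ u, g u * c u I ∂ν) + (∫ u, g u ∂ν) * J := by
          rw [integral_add hiE1 hiE2, integral_mul_const]
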